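/- Let Σ be a d×d real symmetric positive semidefinite matrix with trace(Σ) = d, and let s ∈ {−1,+1}^d. For any constant c > 0 and λ = c·d, one has sᵀ P diag((μ_i + 2λ)/(μ_i + λ)²) Pᵀ s ≥ d · (2c+1)/(d(c+1)²) · (1/d) · ‖s‖₂² = (2c+1)/(c+1)², where Σ = P diag(μ_1,…,μ_d) Pᵀ is a spectral decomposition. Equivalently, 2λ_L² sᵀ(Σ + λI)⁻¹ s − λ_L² sᵀ(Σ+λI)⁻¹ Σ (Σ+λI)⁻¹ s ≥ λ_L² (2c+1)/(c+1)² for any λ_L > 0. -/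

import Mathlib

open Matrix

section Aux

variable {n : Type*} [Fintype n] [DecidableEq n]

omit [DecidableEq n] in
lemma psd_smul {M : Matrix n n ℝ} (hM : M.PosSemidef) {r : ℝ} (hr : 0 ≤ r) :
    (r • M).PosSemidef := by
  refine posSemidef_iff_dotProduct_mulVec.mpr ⟨?_, fun x => ?_⟩
  · show (r • M)ᴴ = r • M
    rw [conjTranspose_smul, hM.1.eq, star_trivial]
  rw [smul_mulVec, dotProduct_smul, smul_eq_mul]
  exact mul_nonneg hr (hM.dotProduct_mulVec_nonneg x)

lemma psd_trace_smul_one_sub {M : Matrix n n ℝ} (hM : M.PosSemidef) :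
    (M.trace • (1 : Matrix n n ℝ) - M).PosSemidef := by
  have hH := hM.1
  set U : Matrix n n ℝ := (hH.eigenvectorUnitary : Matrix n n ℝ) with hU
  have hUU : star U * U = 1 := Unitary.coe_star_mul_self _
  have hUU' : U * star U = 1 := Unitary.coe_mul_star_self _
  have hsp : M = U * diagonal (RCLike.ofReal ∘ hH.eigenvalues) * star U :=
    hH.spectral_theorem
  have htr : M.trace = ∑ i, hH.eigenvalues i := by
    conv_lhs => rw [hsp]
    rw [Matrix.trace_mul_cycle, hUU, Matrix.one_mul,
      Matrix.trace_diagonal]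
    simp
  have key : M.trace • (1 : Matrix n n ℝ) - M
      = U * diagonal (fun i => M.trace - hH.eigenvalues i) * star U := by
    have h1 : (1 : Matrix n n ℝ) = U * 1 * star U := by
      rw [Matrix.mul_one, hUU']
    calc M.trace • (1 : Matrix n n ℝ) - M
        = U * (M.trace • 1 - diagonal (RCLike.ofReal ∘ hH.eigenvalues)) * star U := by
          rw [Matrix.mul_sub, Matrix.sub_mul, Matrix.mul_smul, Matrix.smul_mul,
            Matrix.mul_one, hUU', ← hsp]
      _ = U * diagonal (fun i => M.trace - hH.eigenvalues i) * star U := by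
          congr 1
          congr 1
          rw [smul_one_eq_diagonal, ← diagonal_sub]
          rfl
  rw [key]
  have hdiag : (diagonal (fun i => M.trace - hH.eigenvalues i)).PosSemidef := by
    refine posSemidef_diagonal_iff.mpr fun i => ?_
    rw [htr, sub_nonneg]
    exact Finset.single_le_sum (fun j _ => hM.eigenvalues_nonneg j) (Finset.mem_univ i)
  exact hdiag.mul_mul_conjTranspose_same U

end Aux

/-- For a symmetric PSD `Σ` with `trace Σ = d`, a `±1` sign vector `s`, `c > 0`,
`λ = c·d` and any `λ_L > 0`,
`2 λ_L² sᵀ(Σ + λI)⁻¹ s − λ_L² sᵀ(Σ+λI)⁻¹ Σ (Σ+λI)⁻¹ s ≥ λ_L² (2c+1)/(c+1)²`. -/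
theorem stmt2 (d : ℕ) (hd : 0 < d) (S : Matrix (Fin d) (Fin d) ℝ)
    (hS : S.PosSemidef) (htr : S.trace = (d : ℝ))
    (s : Fin d → ℝ) (hs : ∀ i, s i = 1 ∨ s i = -1)
    (c lamL : ℝ) (hc : 0 < c) (hl : 0 < lamL) :
    lamL ^ 2 * ((2 * c + 1) / (c + 1) ^ 2) ≤
      2 * lamL ^ 2 * (s ⬝ᵥ ((S + (c * d) • (1 : Matrix (Fin d) (Fin d) ℝ))⁻¹).mulVec s)
        - lamL ^ 2 *
          (s ⬝ᵥ (((S + (c * d) • (1 : Matrix (Fin d) (Fin d) ℝ))⁻¹ * S *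
              (S + (c * d) • (1 : Matrix (Fin d) (Fin d) ℝ))⁻¹).mulVec s)) := by
  classical
  have hd' : (0:ℝ) < d := Nat.cast_pos.mpr hd
  set L : ℝ := c * d with hLdef
  have hL : 0 < L := mul_pos hc hd'
  set A : Matrix (Fin d) (Fin d) ℝ := S + L • 1 with hAdef
  have h1 : ((L:ℝ) • (1 : Matrix (Fin d) (Fin d) ℝ)).PosDef := by
    rw [smul_one_eq_diagonal]
    exact posDef_diagonal_iff.mpr fun i => hL
  have hA : A.PosDef := Matrix.PosDef.posSemidef_add hS h1
  have hAU : IsUnit A.det := isUnit_iff_isUnit_det _ |>.1 hA.isUnit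
  set B : Matrix (Fin d) (Fin d) ℝ := A⁻¹ with hBdef
  have hBA : B * A = 1 := A.nonsing_inv_mul hAU
  have hAB : A * B = 1 := A.mul_nonsing_inv hAU
  have hBH : B.IsHermitian := hA.isHermitian.inv
  -- positive semidefiniteness of d•1 - S
  have hdS : (((d:ℝ)) • (1 : Matrix (Fin d) (Fin d) ℝ) - S).PosSemidef := by
    have := psd_trace_smul_one_sub hS
    rwa [htr] at this
  -- positive semidefiniteness of S * (d•1 - S)
  have hSd : (S * (((d:ℝ)) • (1 : Matrix (Fin d) (Fin d) ℝ) - S)).PosSemidef := by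
    obtain ⟨R, hRH, hRR⟩ : ∃ R : Matrix (Fin d) (Fin d) ℝ, Rᴴ = R ∧ R * R = S :=
      by
        open scoped MatrixOrder in
        obtain ⟨X, hX, -, hXX⟩ := CFC.exists_sqrt_of_isSelfAdjoint_of_quasispectrumRestricts
          hS.isHermitian (QuasispectrumRestricts.nnreal_of_nonneg hS.nonneg)
        exact ⟨X, hX, hXX⟩
    have key : R * (((d:ℝ)) • (1 : Matrix (Fin d) (Fin d) ℝ) - S) * R
        = S * (((d:ℝ)) • (1 : Matrix (Fin d) (Fin d) ℝ) - S) := by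
      rw [← hRR]
      simp only [Matrix.mul_sub, Matrix.sub_mul, Matrix.mul_smul, Matrix.smul_mul,
        Matrix.mul_one, Matrix.one_mul, Matrix.mul_assoc]
    have h2 := hdS.mul_mul_conjTranspose_same R
    rwa [hRH, key] at h2
  -- the key PSD combination
  set Q : Matrix (Fin d) (Fin d) ℝ :=
    ((d:ℝ) + 2*L) • (S * (((d:ℝ)) • (1 : Matrix (Fin d) (Fin d) ℝ) - S))
      + (L * (2*(d:ℝ) + 3*L)) • (((d:ℝ)) • (1 : Matrix (Fin d) (Fin d) ℝ) - S) with hQdef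
  have hQ : Q.PosSemidef :=
    (psd_smul hSd (by positivity)).add (psd_smul hdS (by positivity))
  -- identity : Q = ((d+L)^2) • (A + L•1) - ((d+2L)) • (A*A)
  have hiden : Q = (((d:ℝ)+L)^2) • (A + L • 1) - (((d:ℝ) + 2*L)) • (A * A) := by
    rw [hQdef, hAdef]
    simp only [Matrix.add_mul, Matrix.mul_add, Matrix.smul_mul, Matrix.mul_smul,
      Matrix.mul_sub, Matrix.sub_mul, Matrix.mul_one, Matrix.one_mul, smul_add,
      smul_smul, smul_sub]
    module
  -- conjugated PSD matrix
  have hconj : (B * Q * B).PosSemidef := by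
    have := hQ.mul_mul_conjTranspose_same B
    rwa [hBH.eq] at this
  -- compute B * Q * B
  have hBQB : B * Q * B = (((d:ℝ)+L)^2) • (B + L • (B * B)) - (((d:ℝ) + 2*L)) • 1 := by
    rw [hiden]
    rw [Matrix.mul_sub, Matrix.sub_mul, Matrix.mul_smul, Matrix.smul_mul,
      Matrix.mul_smul, Matrix.smul_mul]
    congr 1
    · rw [Matrix.mul_add, Matrix.add_mul, Matrix.mul_smul, Matrix.smul_mul,
        Matrix.mul_one, hBA, Matrix.one_mul]
    · rw [← Matrix.mul_assoc, hBA, Matrix.one_mul, hAB]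
  -- the quadratic form values
  set x1 : ℝ := s ⬝ᵥ B.mulVec s with hx1
  set x2 : ℝ := s ⬝ᵥ (B * B).mulVec s with hx2
  have hss : s ⬝ᵥ s = (d:ℝ) := by
    unfold dotProduct
    have : ∀ i, s i * s i = 1 := by
      intro i; rcases hs i with h | h <;> rw [h] <;> norm_num
    simp [this]
  have hineq : 0 ≤ (((d:ℝ)+L)^2) * (x1 + L * x2) - (((d:ℝ) + 2*L)) * d := by
    have h0 := hconj.dotProduct_mulVec_nonneg s
    rw [star_trivial, hBQB] at h0
    rw [Matrix.sub_mulVec, dotProduct_sub, Matrix.smul_mulVec,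
      Matrix.smul_mulVec, dotProduct_smul, dotProduct_smul,
      Matrix.add_mulVec, dotProduct_add, Matrix.smul_mulVec, dotProduct_smul,
      Matrix.one_mulVec, hss] at h0
    simpa [smul_eq_mul, mul_add, hx1, hx2] using h0
  -- relate B*S*B to B and B*B
  have hBSB : B * S * B = B - L • (B * B) := by
    have hSA : S = A - L • 1 := by rw [hAdef]; abel
    rw [hSA, Matrix.mul_sub, Matrix.sub_mul, hBA, Matrix.one_mul, Matrix.mul_smul,
      Matrix.mul_one, Matrix.smul_mul]
  have hx3 : s ⬝ᵥ (B * S * B).mulVec s = x1 - L * x2 := by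
    rw [hBSB, Matrix.sub_mulVec, dotProduct_sub, Matrix.smul_mulVec,
      dotProduct_smul, smul_eq_mul, hx1, hx2]
  -- final computation
  have hdenpos : (0:ℝ) < ((d:ℝ)+L)^2 := by positivity
  have hfrac : ((d:ℝ) + 2*L) * d / (((d:ℝ)+L)^2) = (2*c+1)/(c+1)^2 := by
    rw [hLdef]
    field_simp
    ring
  have hmain : (2*c+1)/(c+1)^2 ≤ x1 + L * x2 := by
    rw [← hfrac, div_le_iff₀ hdenpos]
    nlinarith [hineq]
  have hl2 : (0:ℝ) < lamL^2 := by positivity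
  calc lamL ^ 2 * ((2 * c + 1) / (c + 1) ^ 2)
      ≤ lamL ^ 2 * (x1 + L * x2) := by
        exact mul_le_mul_of_nonneg_left hmain (le_of_lt hl2)
    _ = 2 * lamL ^ 2 * x1 - lamL ^ 2 * (x1 - L * x2) := by ring
    _ = 2 * lamL ^ 2 * (s ⬝ᵥ B.mulVec s) - lamL ^ 2 * (s ⬝ᵥ (B * S * B).mulVec s) := by
        rw [hx3]
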